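/- Let N ≥ 1, k ≥ 2, and let Ω^1,…,Ω^k ⊂ ℝ^N be bounded open sets with pairwise disjoint closures; set Ω_0 := Ω^1 ∪ … ∪ Ω^k. For each i let F_i : ℝ → ℝ be continuous with F_i(0) = 0 and satisfying (F2) with constants A_i > 0 and μ_i := F_i(A_i) − A_i²/2. Let φ_1,…,φ_k : ℝ^N → ℝ be continuously differentiable functions such that 0 ≤ φ_i ≤ A_i and |∇φ_i| ≤ L_i everywhere, φ_i ≡ A_i on Ω^i, φ_i ≡ 0 on Ω^j for every j ≠ i, and φ_i·φ_j ≡ 0 on ℝ^N for i ≠ j. Let R ⊂ ℝ^N \ Ω_0 be a bounded measurable set and Ω_ε := Ω_0 ∪ R. Then J_{Ω_ε}(φ_1,…,φ_k) ≤ μ + M·|R|, where μ := −Σ_{i=1}^k μ_i·|Ω^i| and M := Σ_{i=1}^k (½L_i² + ½A_i² + sup_{t ∈ [0,A_i]} |F_i(t)|). -/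

import Mathlib

open MeasureTheory

/-- Energy estimate for the segregated test configuration (Lemma 3.4):
`J_{Ω_ε}(φ_1,…,φ_k) ≤ μ + M |R|`, with `μ = −Σ_i μ_i |Ω^i|` and
`M = Σ_i (½L_i² + ½A_i² + sup_{[0,A_i]} |F_i|)`. -/
theorem stmt_19
    {N k : ℕ} (hN : 1 ≤ N) (hk : 2 ≤ k)
    (Ωi : Fin k → Set (EuclideanSpace ℝ (Fin N)))
    (hΩopen : ∀ i, IsOpen (Ωi i)) (hΩbdd : ∀ i, Bornology.IsBounded (Ωi i))
    (hΩdisj : ∀ i j, i ≠ j → Disjoint (closure (Ωi i)) (closure (Ωi j)))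
    (Ω₀ : Set (EuclideanSpace ℝ (Fin N))) (hΩ₀ : Ω₀ = ⋃ i, Ωi i)
    (F : Fin k → ℝ → ℝ) (hFcont : ∀ i, Continuous (F i))
    (hF0 : ∀ i, F i 0 = 0)
    (A : Fin k → ℝ) (hA : ∀ i, 0 < A i)
    (μi : Fin k → ℝ) (hμi : ∀ i, μi i = F i (A i) - (A i) ^ 2 / 2)
    (hF2 : ∀ i, ∀ t : ℝ, 0 ≤ t → F i t - t ^ 2 / 2 ≤ μi i)
    (φ : Fin k → EuclideanSpace ℝ (Fin N) → ℝ)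
    (hφ : ∀ i, ContDiff ℝ 1 (φ i))
    (L : Fin k → ℝ)
    (hφbd : ∀ i, ∀ x, 0 ≤ φ i x ∧ φ i x ≤ A i)
    (hφgrad : ∀ i, ∀ x, ‖fderiv ℝ (φ i) x‖ ≤ L i)
    (hφKi : ∀ i, ∀ x ∈ Ωi i, φ i x = A i)
    (hφKj : ∀ i j, j ≠ i → ∀ x ∈ Ωi j, φ i x = 0)
    (hφseg : ∀ i j, i ≠ j → ∀ x, φ i x * φ j x = 0)
    (R : Set (EuclideanSpace ℝ (Fin N))) (hR : MeasurableSet R)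
    (hRbdd : Bornology.IsBounded R) (hRdisj : R ⊆ Ω₀ᶜ)
    (Ωε : Set (EuclideanSpace ℝ (Fin N))) (hΩε : Ωε = Ω₀ ∪ R)
    (μ : ℝ) (hμ : μ = -∑ i, μi i * (volume (Ωi i)).toReal)
    (M : ℝ)
    (hM : M = ∑ i, (1 / 2 * (L i) ^ 2 + 1 / 2 * (A i) ^ 2
      + sSup ((fun t => |F i t|) '' Set.Icc 0 (A i)))) :
    (∑ i, ∫ x in Ωε,
        (1 / 2 * ‖fderiv ℝ (φ i) x‖ ^ 2 + 1 / 2 * (φ i x) ^ 2 - F i (φ i x)))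
      ≤ μ + M * (volume R).toReal := by
  classical
  set f : Fin k → EuclideanSpace ℝ (Fin N) → ℝ := fun i x =>
    1 / 2 * ‖fderiv ℝ (φ i) x‖ ^ 2 + 1 / 2 * (φ i x) ^ 2 - F i (φ i x) with hf
  -- continuity of integrands
  have hfcont : ∀ i, Continuous (f i) := by
    intro i
    have h1 : Continuous (fderiv ℝ (φ i)) := (hφ i).continuous_fderiv one_ne_zero
    exact ((continuous_const.mul ((h1.norm).pow 2)).add
      (continuous_const.mul (((hφ i).continuous).pow 2))).sub
      ((hFcont i).comp (hφ i).continuous)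
  -- measurability and boundedness
  have hΩ₀meas : MeasurableSet Ω₀ := by
    rw [hΩ₀]; exact MeasurableSet.iUnion fun i => (hΩopen i).measurableSet
  have hΩ₀bdd : Bornology.IsBounded Ω₀ := by
    rw [hΩ₀, ← Set.biUnion_univ]
    exact (Bornology.isBounded_biUnion Set.finite_univ).2 (fun i _ => hΩbdd i)
  have hΩεmeas : MeasurableSet Ωε := by rw [hΩε]; exact hΩ₀meas.union hR
  have hΩεbdd : Bornology.IsBounded Ωε := by rw [hΩε]; exact hΩ₀bdd.union hRbdd
  have hcomp : IsCompact (closure Ωε) := hΩεbdd.isCompact_closure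
  -- integrability
  have hint : ∀ i, IntegrableOn (f i) Ωε := by
    intro i
    exact ((hfcont i).continuousOn.integrableOn_compact hcomp).mono_set subset_closure
  have hRsub : R ⊆ Ωε := by rw [hΩε]; exact Set.subset_union_right
  have hΩ₀sub : Ω₀ ⊆ Ωε := by rw [hΩε]; exact Set.subset_union_left
  have hΩisub : ∀ j, Ωi j ⊆ Ω₀ := by intro j; rw [hΩ₀]; exact Set.subset_iUnion _ j
  -- fderiv vanishes on each Ωi j
  have key : ∀ (g : EuclideanSpace ℝ (Fin N) → ℝ) (c : ℝ) (s : Set (EuclideanSpace ℝ (Fin N))), IsOpen s → (∀ x ∈ s, g x = c) →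
      ∀ x ∈ s, fderiv ℝ g x = 0 := by
    intro g c s hs hgc x hx
    have h : g =ᶠ[nhds x] fun _ => c :=
      Filter.eventuallyEq_of_mem (hs.mem_nhds hx) hgc
    rw [h.fderiv_eq, fderiv_fun_const]
    rfl
  -- value of f i on Ωi j
  have hval : ∀ i j, ∀ x ∈ Ωi j, f i x = if j = i then -(μi i) else 0 := by
    intro i j x hx
    by_cases hji : j = i
    · subst hji
      have hd := key (φ j) (A j) (Ωi j) (hΩopen j) (hφKi j) x hx
      simp only [hf, hd, hφKi j x hx, norm_zero, if_pos rfl, hμi j, if_true, eq_self_iff_true]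
      ring_nf
    · have hd := key (φ i) 0 (Ωi j) (hΩopen j) (hφKj i j hji) x hx
      simp only [hf, hd, hφKj i j hji x hx, norm_zero, if_neg hji, hF0 i]
      ring
  -- integral over Ω₀
  have hΩ₀int : ∀ i, ∫ x in Ω₀, f i x = -(μi i) * (volume (Ωi i)).toReal := by
    intro i
    have hdisj : Pairwise (Function.onFun Disjoint Ωi) := fun a b hab =>
      (hΩdisj a b hab).mono subset_closure subset_closure
    have hintΩ₀ : IntegrableOn (f i) (⋃ j, Ωi j) := by
      rw [← hΩ₀]; exact (hint i).mono_set hΩ₀sub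
    rw [hΩ₀, integral_iUnion (fun j => (hΩopen j).measurableSet) hdisj hintΩ₀,
      tsum_fintype]
    have hterm : ∀ j, ∫ x in Ωi j, f i x = if j = i then -(μi i) * (volume (Ωi i)).toReal else 0 := by
      intro j
      have : ∫ x in Ωi j, f i x = ∫ _x in Ωi j, (if j = i then -(μi i) else 0 : ℝ) :=
        setIntegral_congr_fun (hΩopen j).measurableSet (hval i j)
      rw [this, setIntegral_const, smul_eq_mul]
      by_cases hji : j = i
      · subst hji; simp [mul_comm, Measure.real]
      · simp [hji]
    rw [Finset.sum_congr rfl (fun j _ => hterm j)]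
    simp
  -- bound on R
  have hRfin : volume R ≠ ⊤ := hRbdd.measure_lt_top.ne
  have hRint : ∀ i, ∫ x in R, f i x ≤
      (1 / 2 * (L i) ^ 2 + 1 / 2 * (A i) ^ 2
        + sSup ((fun t => |F i t|) '' Set.Icc 0 (A i))) * (volume R).toReal := by
    intro i
    set Mi := 1 / 2 * (L i) ^ 2 + 1 / 2 * (A i) ^ 2
      + sSup ((fun t => |F i t|) '' Set.Icc 0 (A i)) with hMi
    have hbdd : BddAbove ((fun t => |F i t|) '' Set.Icc 0 (A i)) :=
      (isCompact_Icc.image (continuous_abs.comp (hFcont i))).bddAbove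
    have hb : ∀ x ∈ R, f i x ≤ Mi := by
      intro x _
      have h1 : ‖fderiv ℝ (φ i) x‖ ^ 2 ≤ (L i) ^ 2 :=
        pow_le_pow_left₀ (norm_nonneg _) (hφgrad i x) 2
      have h2 : (φ i x) ^ 2 ≤ (A i) ^ 2 :=
        pow_le_pow_left₀ (hφbd i x).1 (hφbd i x).2 2
      have h3 : -F i (φ i x) ≤ sSup ((fun t => |F i t|) '' Set.Icc 0 (A i)) := by
        refine le_trans (neg_le_abs _) (le_csSup hbdd ?_)
        exact ⟨φ i x, ⟨(hφbd i x).1, (hφbd i x).2⟩, rfl⟩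
      simp only [hf, hMi]
      linarith
    calc ∫ x in R, f i x ≤ ∫ _x in R, Mi := by
          refine setIntegral_mono_on ((hint i).mono_set hRsub) ?_ hR hb
          exact integrableOn_const hRbdd.measure_lt_top.ne
      _ = Mi * (volume R).toReal := by
          rw [setIntegral_const, smul_eq_mul, mul_comm]; rfl
  -- split integral
  have hsplit : ∀ i, ∫ x in Ωε, f i x = (∫ x in Ω₀, f i x) + ∫ x in R, f i x := by
    intro i
    rw [hΩε]
    exact setIntegral_union (Set.disjoint_left.mpr fun x hx hxR => hRdisj hxR hx) hR
      ((hint i).mono_set hΩ₀sub) ((hint i).mono_set hRsub)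
  calc (∑ i, ∫ x in Ωε, f i x)
      = ∑ i, (-(μi i) * (volume (Ωi i)).toReal + ∫ x in R, f i x) := by
        refine Finset.sum_congr rfl fun i _ => ?_
        rw [hsplit i, hΩ₀int i]
    _ ≤ ∑ i, (-(μi i) * (volume (Ωi i)).toReal
          + (1 / 2 * (L i) ^ 2 + 1 / 2 * (A i) ^ 2
            + sSup ((fun t => |F i t|) '' Set.Icc 0 (A i))) * (volume R).toReal) := by
        exact Finset.sum_le_sum fun i _ => add_le_add (le_refl _) (hRint i)
    _ = μ + M * (volume R).toReal := by
        rw [Finset.sum_add_distrib, hμ, hM, ← Finset.sum_neg_distrib,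
          ← Finset.sum_mul]
        congr 1
        exact Finset.sum_congr rfl fun i _ => by ring
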